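/- For every knowledge graph G=(V,E,R,c) with n = |V|, every T ≥ 0 and every history function f, there exist an initial feature map x: V → ℝⁿ with c ≡ x, matrices W^{(t)} ∈ ℝ^{n×n} and scalars α_r^{(t)} ∈ ℝ (for r ∈ R and 0 ≤ t < T) such that the feature maps defined by h^{(0)} = x and h_v^{(t+1)} = sign(W^{(t)}·(h_v^{(f(t))} + Σ_{r∈R} Σ_{w∈N_r(v)} α_r^{(t)} h_w^{(t)}) − 𝟙) satisfy h^{(t)} ≡ rwl_1^{(t)} for all 0 ≤ t ≤ T, where sign is applied entrywise and 𝟙 is the all-ones vector. -/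

import Mathlib

set_option linter.unusedSectionVars false
set_option linter.unusedVariables false


/-- A knowledge graph: a finite set of facts `r(u,v)` (stored as triples `(r,u,v)`)
together with a node coloring. -/
structure KG (V R D : Type) where
  edges : Finset (R × V × V)
  color : V → D

namespace KG

variable {V R D D₂ X : Type}

/-- For a fact `r(u,v)` we say `u ∈ N_r(v)`.  `G.msgMS g v` is the multiset
`{{ (g w, r) : w ∈ N_r(v), r ∈ R }}`. -/
def msgMS [DecidableEq V] (G : KG V R D) (g : V → X) (v : V) : Multiset (X × R) :=
  (G.edges.val.filter (fun e => e.2.2 = v)).map (fun e => (g e.2.1, e.1))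

end KG

/-- Color type of the relational local 1-WL test after `t` rounds (τ is the identity pairing). -/
def Color1 (D R : Type) : ℕ → Type
  | 0 => D
  | t + 1 => Color1 D R t × Multiset (Color1 D R t × R)

/-- The relational local 1-WL test `rwl₁`. -/
def rwl1 {V R D : Type} [DecidableEq V] (G : KG V R D) : (t : ℕ) → V → Color1 D R t
  | 0 => G.color
  | t + 1 => fun v => (rwl1 G t v, G.msgMS (rwl1 G t) v)

/-- The relational asymmetric local 2-WL test `rawl₂` with initial pairwise coloring `η`. -/
def rawl2 {V R D D₂ : Type} [DecidableEq V] (G : KG V R D) (η : V → V → D₂) :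
    (t : ℕ) → V → V → Color1 D₂ R t
  | 0 => η
  | t + 1 => fun u v => (rawl2 G η t u v, G.msgMS (rawl2 G η t u) v)

/-- Color type of the relational symmetric local 2-WL test after `t` rounds. -/
def Color2 (D R : Type) : ℕ → Type
  | 0 => D
  | t + 1 => Color2 D R t × Multiset (Color2 D R t × R) × Multiset (Color2 D R t × R)

/-- The relational symmetric local 2-WL test `rwl₂` with initial pairwise coloring `η`. -/
def rwl2 {V R D D₂ : Type} [DecidableEq V] (G : KG V R D) (η : V → V → D₂) :
    (t : ℕ) → V → V → Color2 D₂ R t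
  | 0 => η
  | t + 1 => fun u v =>
      (rwl2 G η t u v, G.msgMS (fun w => rwl2 G η t w v) u, G.msgMS (rwl2 G η t u) v)

/-- The augmented knowledge graph `G⁺` with fresh inverse relations (`Sum.inr r` is `r⁻`). -/
def KG.aug {V R D : Type} [DecidableEq V] [DecidableEq R] (G : KG V R D) : KG V (R ⊕ R) D where
  edges := G.edges.image (fun e => (Sum.inl e.1, e.2)) ∪
    (G.edges.filter (fun e => e.2.1 ≠ e.2.2)).image (fun e => (Sum.inr e.1, e.2.2, e.2.1))
  color := G.color

/-- The graph `G²` of pairs: facts `r((u,w),(u,v))` for `r(w,v) ∈ E`, colored by `η`. -/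
def KG.sq {V R D D₂ : Type} [Fintype V] [DecidableEq V] [DecidableEq R]
    (G : KG V R D) (η : V → V → D₂) : KG (V × V) R D₂ where
  edges := (Finset.univ ×ˢ G.edges).image
      (fun p => (p.2.1, (p.1, p.2.2.1), (p.1, p.2.2.2)))
  color := fun p => η p.1 p.2

/-- A relational message passing neural network (R-MPNN) with feature dimensions `d t`:
a history function `f` (non-decreasing, `f t ≤ t`) and, per layer, arbitrary
relation-specific message functions, an aggregation on finite multisets and an update. -/
structure RMPNN (R : Type) (d : ℕ → ℕ) where
  f : ℕ → ℕ
  f_mono : Monotone f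
  f_le : ∀ t, f t ≤ t
  M : ℕ → Type
  A : ℕ → Type
  msg : (t : ℕ) → R → (Fin (d t) → ℝ) → M t
  agg : (t : ℕ) → Multiset (M t) → A t
  upd : (t : ℕ) → (Fin (d (f t)) → ℝ) → A t → Fin (d (t + 1)) → ℝ

/-- Features `h^(t)_v` computed by an R-MPNN on `G` from initial features `x`. -/
def RMPNN.h {V R D : Type} [DecidableEq V] {d : ℕ → ℕ} (N : RMPNN R d) (G : KG V R D)
    (x : V → Fin (d 0) → ℝ) : (t : ℕ) → V → Fin (d t) → ℝ
  | 0 => x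
  | t + 1 => fun v =>
      N.upd t (N.h G x (N.f t) v)
        (N.agg t ((G.edges.val.filter (fun e => e.2.2 = v)).map
          (fun e => N.msg t e.1 (N.h G x t e.2.1))))
termination_by t => t
decreasing_by
  · exact Nat.lt_succ_of_le (N.f_le t)
  · exact Nat.lt_succ_self t

/-- A conditional message passing neural network (C-MPNN) with feature dimensions `d t`;
the relation-specific message functions additionally take the query relation. -/
structure CMPNN (R : Type) (d : ℕ → ℕ) where
  f : ℕ → ℕ
  f_mono : Monotone f
  f_le : ∀ t, f t ≤ t
  M : ℕ → Type
  A : ℕ → Type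
  msg : (t : ℕ) → R → (Fin (d t) → ℝ) → R → M t
  agg : (t : ℕ) → Multiset (M t) → A t
  upd : (t : ℕ) → (Fin (d (f t)) → ℝ) → A t → Fin (d (t + 1)) → ℝ

/-- Features `h^(t)_{v|u,q}` computed by a C-MPNN on `G` for query `q` with
initialization `δ`; `CMPNN.h N G q δ t u v = h_q^(t)(u,v)`. -/
def CMPNN.h {V R D : Type} [DecidableEq V] {d : ℕ → ℕ} (N : CMPNN R d) (G : KG V R D)
    (q : R) (δ : V → V → R → Fin (d 0) → ℝ) : (t : ℕ) → V → V → Fin (d t) → ℝ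
  | 0 => fun u v => δ u v q
  | t + 1 => fun u v =>
      N.upd t (N.h G q δ (N.f t) u v)
        (N.agg t ((G.edges.val.filter (fun e => e.2.2 = v)).map
          (fun e => N.msg t e.1 (N.h G q δ t u e.2.1) q)))
termination_by t => t
decreasing_by
  · exact Nat.lt_succ_of_le (N.f_le t)
  · exact Nat.lt_succ_self t

/-- The concrete R-MPNN model used in the simulation: features in `ℝⁿ`, update
`h_v^(t+1) = sign(W^(t)·(h_v^(f(t)) + Σ_{r∈R} Σ_{w∈N_r(v)} α_r^(t) h_w^(t)) − 𝟙)`,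
with `sign` applied entrywise and `𝟙` the all-ones vector. -/
noncomputable def signModel {V R D : Type} [DecidableEq V] {n : ℕ} (G : KG V R D)
    (f : ℕ → ℕ) (hf : ∀ t, f t ≤ t) (x : V → Fin n → ℝ)
    (W : ℕ → Matrix (Fin n) (Fin n) ℝ) (α : ℕ → R → ℝ) :
    (t : ℕ) → V → Fin n → ℝ
  | 0 => x
  | t + 1 => fun v i => Real.sign
      ((∑ j, W t i j *
        (signModel G f hf x W α (f t) v j +
          ((G.edges.val.filter (fun e => e.2.2 = v)).map
            (fun e => α t e.1 * signModel G f hf x W α t e.2.1 j)).sum)) - 1)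
termination_by t => t
decreasing_by
  · exact Nat.lt_succ_of_le (hf t)
  · exact Nat.lt_succ_self t


/-- thermometer pattern -/
def pat (ρ j : ℕ) : ℤ := if 1 ≤ j ∧ j ≤ ρ then 1 else -1

lemma pat_abs (ρ j : ℕ) : |pat ρ j| ≤ 1 := by
  unfold pat; split <;> simp

lemma pat_zero (ρ : ℕ) : pat ρ 0 = -1 := by simp [pat]

lemma pat_inj {n ρ ρ' : ℕ} (hρ : ρ < n) (hρ' : ρ' < n)
    (h : ∀ j < n, pat ρ j = pat ρ' j) : ρ = ρ' := by
  by_contra hne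
  rcases Nat.lt_or_ge ρ ρ' with hlt | hge
  · have := h (ρ + 1) (by omega)
    simp only [pat] at this
    rw [if_neg (by omega), if_pos (by omega)] at this
    omega
  · have hlt : ρ' < ρ := by omega
    have := h (ρ' + 1) (by omega)
    simp only [pat] at this
    rw [if_pos (by omega), if_neg (by omega)] at this
    omega

/-- base-B digit uniqueness over ℤ -/
lemma digit_zero (B M : ℤ) (hM : 0 ≤ M) (hB : 2 * M + 1 ≤ B) :
    ∀ (N : ℕ) (d : ℕ → ℤ), (∀ i, |d i| ≤ M) →
      (∑ i ∈ Finset.range N, d i * B ^ i) = 0 → ∀ i < N, d i = 0 := by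
  intro N
  induction N with
  | zero => intro d _ _ i hi; omega
  | succ N ih =>
    intro d hd hsum i hi
    rw [Finset.sum_range_succ'] at hsum
    have hre : ∀ j ∈ Finset.range N, d (j + 1) * B ^ (j + 1) = B * (d (j + 1) * B ^ j) := by
      intro j _; ring
    rw [Finset.sum_congr rfl hre, ← Finset.mul_sum] at hsum
    set S := ∑ j ∈ Finset.range N, d (j + 1) * B ^ j with hS
    have hd0 : d 0 = 0 ∧ S = 0 := by
      have h0 : |d 0| ≤ M := hd 0
      by_cases hS0 : S = 0
      · constructor
        · rw [hS0] at hsum; simpa using hsum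
        · exact hS0
      · exfalso
        have h1 : |B * S| = |d 0| := by
          have : B * S = -(d 0 * B ^ 0) := by rw [pow_zero] at hsum ⊢; omega
          rw [this, abs_neg, pow_zero, mul_one]
        have h2 : |B| ≤ |B * S| := by
          rw [abs_mul]
          nlinarith [abs_pos.mpr hS0, abs_nonneg B, abs_pos.mpr hS0]
        have hBpos : 0 < B := by omega
        rw [abs_of_pos hBpos] at h2
        omega
    rcases Nat.eq_zero_or_pos i with rfl | hipos
    · exact hd0.1
    · obtain ⟨j, rfl⟩ := Nat.exists_eq_add_of_lt hipos
      simp only [Nat.zero_add] at *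
      exact ih (fun j => d (j + 1)) (fun j => hd (j + 1)) hd0.2 j (by omega)

/-- countP recursion -/
lemma countP_le_step (s : Multiset ℕ) (a : ℕ) :
    Multiset.countP (fun x => a ≤ x) s
      = Multiset.countP (fun x => a + 1 ≤ x) s + Multiset.count a s := by
  induction s using Multiset.induction_on with
  | empty => simp
  | cons b s ih =>
    rw [Multiset.countP_cons, Multiset.countP_cons, Multiset.count_cons]
    by_cases h2 : a + 1 ≤ b
    · rw [if_pos (by omega : a ≤ b), if_pos h2, if_neg (by omega : ¬ a = b)]; omega
    · by_cases h3 : a = b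
      · rw [if_pos (by omega : a ≤ b), if_neg h2, if_pos h3]; omega
      · rw [if_neg (by omega : ¬ a ≤ b), if_neg h2, if_neg h3]; omega

lemma sum_pat_map (j : ℕ) (hj : 1 ≤ j) (s : Multiset ℕ) :
    (s.map (fun ρ => pat ρ j)).sum
      = 2 * (Multiset.countP (fun x => j ≤ x) s : ℤ) - Multiset.card s := by
  induction s using Multiset.induction_on with
  | empty => simp
  | cons b s ih =>
    rw [Multiset.map_cons, Multiset.sum_cons, Multiset.countP_cons, Multiset.card_cons, ih]
    simp only [pat]
    by_cases h : j ≤ b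
    · rw [if_pos ⟨hj, h⟩, if_pos h]; push_cast; ring
    · rw [if_neg (by tauto), if_neg h]; push_cast; ring

lemma sum_pat_map_zero (s : Multiset ℕ) :
    (s.map (fun ρ => pat ρ 0)).sum = -(Multiset.card s : ℤ) := by
  induction s using Multiset.induction_on with
  | empty => simp
  | cons b s ih => rw [Multiset.map_cons, Multiset.sum_cons, Multiset.card_cons, ih, pat_zero]; push_cast; ring

/-- separation: coordinate sums of patterns determine the multiset -/
lemma sep_pat {n : ℕ} (s s' : Multiset ℕ) (hs : ∀ a ∈ s, a < n) (hs' : ∀ a ∈ s', a < n)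
    (h : ∀ j < n, (s.map (fun ρ => pat ρ j)).sum = (s'.map (fun ρ => pat ρ j)).sum) :
    s = s' := by
  rcases Nat.eq_zero_or_pos n with rfl | hn
  · have : s = 0 := Multiset.eq_zero_of_forall_notMem (fun a ha => by have := hs a ha; omega)
    have h2 : s' = 0 := Multiset.eq_zero_of_forall_notMem (fun a ha => by have := hs' a ha; omega)
    rw [this, h2]
  · have hcard : Multiset.card s = Multiset.card s' := by
      have := h 0 hn
      rw [sum_pat_map_zero, sum_pat_map_zero] at this
      exact_mod_cast neg_inj.mp this
    have hcountP : ∀ j, Multiset.countP (fun x => j ≤ x) s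
        = Multiset.countP (fun x => j ≤ x) s' := by
      intro j
      rcases Nat.eq_zero_or_pos j with rfl | hj
      · rw [Multiset.countP_eq_card.mpr (by intro a _; omega),
          Multiset.countP_eq_card.mpr (by intro a _; omega), hcard]
      · rcases Nat.lt_or_ge j n with hjn | hjn
        · have := h j hjn
          rw [sum_pat_map j hj, sum_pat_map j hj, hcard] at this
          omega
        · rw [Multiset.countP_eq_zero.mpr (fun a ha => by have := hs a ha; omega),
            Multiset.countP_eq_zero.mpr (fun a ha => by have := hs' a ha; omega)]
    ext a
    have h1 := countP_le_step s a
    have h2 := countP_le_step s' a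
    have := hcountP a
    have := hcountP (a + 1)
    omega

/-- multiset abs sum bound -/
lemma msum_abs_le (s : Multiset ℤ) (c : ℤ) (h : ∀ x ∈ s, |x| ≤ c) :
    |s.sum| ≤ Multiset.card s * c := by
  induction s using Multiset.induction_on with
  | empty => simp
  | cons b s ih =>
    rw [Multiset.sum_cons, Multiset.card_cons]
    have h1 : |b| ≤ c := h b (Multiset.mem_cons_self b s)
    have h2 := ih (fun x hx => h x (Multiset.mem_cons_of_mem hx))
    calc |b + s.sum| ≤ |b| + |s.sum| := abs_add_le _ _
    _ ≤ c + Multiset.card s * c := by omega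
    _ = (Multiset.card s + 1) * c := by ring
    _ = _ := by push_cast; ring

/-- fiberwise regrouping of a multiset sum -/
lemma fib_sum {R : Type} (U : Multiset (R × ℕ)) (K : ℕ) (g : R → ℕ)
    (hU : ∀ q ∈ U, g q.1 < K) (F : ℕ → ℤ) (P : ℕ → ℤ) :
    (U.map (fun q => F (g q.1) * P q.2)).sum
      = ∑ i ∈ Finset.range K, F i * ((U.filter (fun q => g q.1 = i)).map (fun q => P q.2)).sum := by
  classical
  induction U using Multiset.induction_on with
  | empty => simp
  | cons b U ih =>
    have hb : g b.1 < K := hU b (Multiset.mem_cons_self b U)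
    have hU' : ∀ q ∈ U, g q.1 < K := fun q hq => hU q (Multiset.mem_cons_of_mem hq)
    rw [Multiset.map_cons, Multiset.sum_cons, ih hU']
    have hsplit : ∀ i ∈ Finset.range K,
        F i * (((b ::ₘ U).filter (fun q => g q.1 = i)).map (fun q => P q.2)).sum
        = F i * ((U.filter (fun q => g q.1 = i)).map (fun q => P q.2)).sum
          + (if g b.1 = i then F (g b.1) * P b.2 else 0) := by
      intro i _
      by_cases hgi : g b.1 = i
      · rw [Multiset.filter_cons_of_pos _ (by simpa using hgi), if_pos hgi,
          Multiset.map_cons, Multiset.sum_cons, hgi]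
        ring
      · rw [Multiset.filter_cons_of_neg _ (by simpa using hgi), if_neg hgi]
        ring
    rw [Finset.sum_congr rfl hsplit, Finset.sum_add_distrib, Finset.sum_ite_eq (Finset.range K)]
    rw [if_pos (Finset.mem_range.mpr hb)]
    ring

section RWL
variable {V R D : Type} [DecidableEq V]

def cproj (D R : Type) (s : ℕ) : (k : ℕ) → Color1 D R (s + k) → Color1 D R s
  | 0, c => c
  | k + 1, c => cproj D R s k c.1

lemma cproj_rwl1 (G : KG V R D) (s k : ℕ) (v : V) :
    cproj D R s k (rwl1 G (s + k) v) = rwl1 G s v := by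
  induction k with
  | zero => rfl
  | succ k ih =>
    show cproj D R s k (rwl1 G (s + k + 1) v).1 = rwl1 G s v
    have : (rwl1 G (s + k + 1) v).1 = rwl1 G (s + k) v := rfl
    rw [this, ih]

lemma rwl1_eq_of_le (G : KG V R D) {s t : ℕ} {u v : V} (hst : s ≤ t)
    (h : rwl1 G t u = rwl1 G t v) : rwl1 G s u = rwl1 G s v := by
  obtain ⟨k, rfl⟩ := Nat.le.dest hst
  have := congrArg (cproj D R s k) h
  rwa [cproj_rwl1, cproj_rwl1] at this

lemma msg_proj (G : KG V R D) (s k : ℕ) (v : V) :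
    G.msgMS (rwl1 G s) v
      = (G.msgMS (rwl1 G (s + k)) v).map (fun p => (cproj D R s k p.1, p.2)) := by
  unfold KG.msgMS
  rw [Multiset.map_map]
  refine Multiset.map_congr rfl ?_
  intro e _
  simp [Function.comp, cproj_rwl1]

lemma msg_eq_of_le (G : KG V R D) {s t : ℕ} {u v : V} (hst : s ≤ t)
    (h : G.msgMS (rwl1 G t) u = G.msgMS (rwl1 G t) v) :
    G.msgMS (rwl1 G s) u = G.msgMS (rwl1 G s) v := by
  obtain ⟨k, rfl⟩ := Nat.le.dest hst
  rw [msg_proj G s k, msg_proj G s k, h]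

lemma rwl1_history (G : KG V R D) {a b : ℕ} {u v : V} (hab : a ≤ b)
    (h1 : rwl1 G a u = rwl1 G a v)
    (h2 : G.msgMS (rwl1 G b) u = G.msgMS (rwl1 G b) v) :
    rwl1 G b u = rwl1 G b v := by
  obtain ⟨k, rfl⟩ := Nat.le.dest hab
  clear hab
  induction k with
  | zero => exact h1
  | succ k ih =>
    have hmsg : G.msgMS (rwl1 G (a + k)) u = G.msgMS (rwl1 G (a + k)) v :=
      msg_eq_of_le G (by omega) h2
    have hr : rwl1 G (a + k) u = rwl1 G (a + k) v := ih hmsg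
    show rwl1 G (a + k + 1) u = rwl1 G (a + k + 1) v
    show (rwl1 G (a + k) u, G.msgMS (rwl1 G (a + k)) u)
       = (rwl1 G (a + k) v, G.msgMS (rwl1 G (a + k)) v)
    rw [hr, hmsg]

end RWL

section Step
variable {V R D : Type} [Fintype V] [DecidableEq V] [DecidableEq R]

def R0 (G : KG V R D) : Finset R := G.edges.image Prod.fst

noncomputable def idxF (G : KG V R D) : R → ℕ := fun r =>
  if h : r ∈ R0 G then ((R0 G).equivFin ⟨r, h⟩ : Fin (R0 G).card).val else 0

lemma idxF_lt (G : KG V R D) {r : R} (h : r ∈ R0 G) : idxF G r < (R0 G).card := by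
  rw [idxF, dif_pos h]; exact ((R0 G).equivFin ⟨r, h⟩).isLt

lemma idxF_inj (G : KG V R D) {r r' : R} (h : r ∈ R0 G) (h' : r' ∈ R0 G)
    (he : idxF G r = idxF G r') : r = r' := by
  simp only [idxF] at he
  rw [dif_pos h, dif_pos h'] at he
  have := (R0 G).equivFin.injective (Fin.ext he)
  exact congrArg Subtype.val this

def Bc (G : KG V R D) : ℤ := 4 * G.edges.card + 5

noncomputable def alphaF (G : KG V R D) : R → ℝ := fun r =>
  ((Bc G ^ (idxF G r + 1) : ℤ) : ℝ)

noncomputable def Cc (G : KG V R D) : ℤ := 1 + G.edges.card * Bc G ^ (R0 G).card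

noncomputable def Dc (G : KG V R D) (n : ℕ) : ℤ := 4 * (Cc G + 1) * (n + 1)

noncomputable def coefF (G : KG V R D) (n : ℕ) : Fin n → ℤ := fun j =>
  if j.val = 0 then -(Dc G n ^ n) else Dc G n ^ j.val

def TmF (G : KG V R D) (ρb : V → ℕ) : V → Multiset (R × ℕ) := fun v =>
  (G.edges.val.filter (fun e => e.2.2 = v)).map (fun e => (e.1, ρb e.2.1))

noncomputable def YF (G : KG V R D) (n : ℕ) (ρa ρb : V → ℕ) : V → Fin n → ℤ :=
  fun v j => pat (ρa v) j.val
    + ((TmF G ρb v).map (fun q => Bc G ^ (idxF G q.1 + 1) * pat q.2 j.val)).sum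

noncomputable def GZF (G : KG V R D) (n : ℕ) (ρa ρb : V → ℕ) : V → ℤ :=
  fun v => ∑ j, coefF G n j * YF G n ρa ρb v j

lemma Bc_pos (G : KG V R D) : 0 < Bc G := by
  have : (0:ℤ) ≤ G.edges.card := Int.natCast_nonneg _
  unfold Bc; omega

lemma Cc_one_le (G : KG V R D) : 1 ≤ Cc G := by
  have h1 : (0:ℤ) < Bc G ^ (R0 G).card := pow_pos (Bc_pos G) _
  have : (0:ℤ) ≤ G.edges.card := Int.natCast_nonneg _
  unfold Cc; nlinarith

lemma Dc_pos (G : KG V R D) (n : ℕ) : 0 < Dc G n := by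
  have := Cc_one_le G
  have : (0:ℤ) ≤ (n:ℤ) := Int.natCast_nonneg _
  unfold Dc; nlinarith [Cc_one_le G]

lemma TmF_card_le (G : KG V R D) (ρb : V → ℕ) (v : V) :
    Multiset.card (TmF G ρb v) ≤ G.edges.card := by
  unfold TmF
  rw [Multiset.card_map]
  exact Multiset.card_le_card (Multiset.filter_le _ _)

lemma TmF_fst_mem (G : KG V R D) (ρb : V → ℕ) (v : V) {q : R × ℕ} (hq : q ∈ TmF G ρb v) :
    q.1 ∈ R0 G := by
  unfold TmF at hq
  obtain ⟨e, he, rfl⟩ := Multiset.mem_map.mp hq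
  have he' : e ∈ G.edges.val := Multiset.mem_of_mem_filter he
  exact Finset.mem_image_of_mem Prod.fst he'

lemma YF_abs_le (G : KG V R D) (n : ℕ) (ρa ρb : V → ℕ) (v : V) (j : Fin n) :
    |YF G n ρa ρb v j| ≤ Cc G := by
  have hB := Bc_pos G
  have hsum : |((TmF G ρb v).map
      (fun q => Bc G ^ (idxF G q.1 + 1) * pat q.2 j.val)).sum|
      ≤ (G.edges.card : ℤ) * Bc G ^ (R0 G).card := by
    have h1 : ∀ x ∈ (TmF G ρb v).map
        (fun q => Bc G ^ (idxF G q.1 + 1) * pat q.2 j.val),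
        |x| ≤ Bc G ^ (R0 G).card := by
      intro x hx
      obtain ⟨q, hq, rfl⟩ := Multiset.mem_map.mp hx
      rw [abs_mul, abs_of_pos (pow_pos hB _)]
      calc Bc G ^ (idxF G q.1 + 1) * |pat q.2 j.val|
          ≤ Bc G ^ (idxF G q.1 + 1) * 1 :=
            mul_le_mul_of_nonneg_left (pat_abs _ _) (le_of_lt (pow_pos hB _))
        _ = Bc G ^ (idxF G q.1 + 1) := mul_one _
        _ ≤ Bc G ^ (R0 G).card :=
            pow_le_pow_right₀ (by omega) (idxF_lt G (TmF_fst_mem G ρb v hq))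
    calc |((TmF G ρb v).map _).sum|
        ≤ (Multiset.card ((TmF G ρb v).map
            (fun q => Bc G ^ (idxF G q.1 + 1) * pat q.2 j.val)) : ℤ)
            * Bc G ^ (R0 G).card := msum_abs_le _ _ h1
      _ ≤ (G.edges.card : ℤ) * Bc G ^ (R0 G).card := by
          rw [Multiset.card_map]
          have := TmF_card_le G ρb v
          have hp : (0:ℤ) < Bc G ^ (R0 G).card := pow_pos hB _
          have : (Multiset.card (TmF G ρb v) : ℤ) ≤ (G.edges.card : ℤ) := by
            exact_mod_cast TmF_card_le G ρb v
          nlinarith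
  unfold YF
  calc |pat (ρa v) j.val + _| ≤ |pat (ρa v) j.val| + _ := abs_add_le _ _
    _ ≤ 1 + (G.edges.card : ℤ) * Bc G ^ (R0 G).card := by
        have := pat_abs (ρa v) j.val; omega
    _ = Cc G := rfl

lemma msum_nonpos (s : Multiset ℤ) (h : ∀ x ∈ s, x ≤ 0) : s.sum ≤ 0 := by
  induction s using Multiset.induction_on with
  | empty => simp
  | cons b s ih =>
    rw [Multiset.sum_cons]
    have := h b (Multiset.mem_cons_self b s)
    have := ih (fun x hx => h x (Multiset.mem_cons_of_mem hx))
    omega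

lemma YF_zero_le (G : KG V R D) (n : ℕ) (ρa ρb : V → ℕ) (v : V) (hn1 : 1 ≤ n) :
    YF G n ρa ρb v ⟨0, hn1⟩ ≤ -1 := by
  have hB := Bc_pos G
  have hs : ((TmF G ρb v).map
      (fun q => Bc G ^ (idxF G q.1 + 1) * pat q.2 ((⟨0, hn1⟩ : Fin n)).val)).sum ≤ 0 := by
    apply msum_nonpos
    intro x hx
    obtain ⟨q, hq, rfl⟩ := Multiset.mem_map.mp hx
    have : pat q.2 ((⟨0, hn1⟩ : Fin n)).val = -1 := pat_zero _
    rw [this]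
    nlinarith [pow_pos hB (idxF G q.1 + 1)]
  show pat (ρa v) ((⟨0, hn1⟩ : Fin n)).val + _ ≤ -1
  have : pat (ρa v) ((⟨0, hn1⟩ : Fin n)).val = -1 := pat_zero _
  omega

lemma GZF_pos (G : KG V R D) (n : ℕ) (hn1 : 1 ≤ n) (ρa ρb : V → ℕ) (v : V) :
    0 < GZF G n ρa ρb v := by
  have hC := Cc_one_le G
  have hD := Dc_pos G n
  set z : Fin n := ⟨0, hn1⟩ with hz
  have hsplit : ∑ j ∈ Finset.univ.erase z, coefF G n j * YF G n ρa ρb v j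
      + coefF G n z * YF G n ρa ρb v z = ∑ j, coefF G n j * YF G n ρa ρb v j :=
    Finset.sum_erase_add _ _ (Finset.mem_univ z)
  have hcz : coefF G n z = -(Dc G n ^ n) := by rw [coefF]; simp [hz]
  have htail : |∑ j ∈ Finset.univ.erase z, coefF G n j * YF G n ρa ρb v j|
      ≤ ((n - 1 : ℕ) : ℤ) * (Dc G n ^ (n-1) * Cc G) := by
    calc |∑ j ∈ Finset.univ.erase z, coefF G n j * YF G n ρa ρb v j|
        ≤ ∑ j ∈ Finset.univ.erase z, |coefF G n j * YF G n ρa ρb v j| :=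
          Finset.abs_sum_le_sum_abs _ _
      _ ≤ (Finset.univ.erase z).card • (Dc G n ^ (n-1) * Cc G) := by
          apply Finset.sum_le_card_nsmul
          intro j hj
          have hjz : j.val ≠ 0 := by
            intro h0
            exact (Finset.mem_erase.mp hj).1 (Fin.ext h0)
          have hcj : coefF G n j = Dc G n ^ j.val := by rw [coefF, if_neg hjz]
          rw [abs_mul, hcj, abs_of_pos (pow_pos hD _)]
          have h1 : Dc G n ^ j.val ≤ Dc G n ^ (n-1) :=
            pow_le_pow_right₀ (by omega) (by omega)
          have h2 := YF_abs_le G n ρa ρb v j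
          have h3 : (0:ℤ) ≤ |YF G n ρa ρb v j| := abs_nonneg _
          nlinarith [pow_pos hD j.val, pow_pos hD (n-1)]
      _ = ((n - 1 : ℕ) : ℤ) * (Dc G n ^ (n-1) * Cc G) := by
          rw [Finset.card_erase_of_mem (Finset.mem_univ z), Finset.card_univ,
            Fintype.card_fin, nsmul_eq_mul]
  have hz' : -(Dc G n ^ n) * YF G n ρa ρb v z ≥ Dc G n ^ n := by
    have := YF_zero_le G n ρa ρb v hn1
    have hp : (0:ℤ) < Dc G n ^ n := pow_pos hD _
    nlinarith
  have hpow : Dc G n ^ n = Dc G n ^ (n-1) * Dc G n := by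
    have h := pow_succ (Dc G n) (n-1)
    rwa [show n - 1 + 1 = n by omega] at h
  have hne : ((n - 1 : ℕ) : ℤ) * Cc G < Dc G n := by
    have h1 : ((n - 1 : ℕ) : ℤ) ≤ (n:ℤ) + 1 := by
      have : ((n-1:ℕ):ℤ) ≤ (n:ℤ) := by exact_mod_cast Nat.sub_le n 1
      omega
    have h2 : (0:ℤ) ≤ (n:ℤ) + 1 := by positivity
    unfold Dc; nlinarith
  show 0 < ∑ j, coefF G n j * YF G n ρa ρb v j
  rw [← hsplit, hcz]
  have hpp : (0:ℤ) < Dc G n ^ (n-1) := pow_pos hD _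
  nlinarith [abs_nonneg (∑ j ∈ Finset.univ.erase z, coefF G n j * YF G n ρa ρb v j),
    abs_le.mp htail]

end Step

section Key
variable {V R D : Type} [Fintype V] [DecidableEq V] [DecidableEq R]

noncomputable def SF (G : KG V R D) (ρb : V → ℕ) (i : ℕ) (v : V) (jv : ℕ) : ℤ :=
  (((TmF G ρb v).filter (fun q => idxF G q.1 = i)).map (fun q => pat q.2 jv)).sum

lemma YF_decomp (G : KG V R D) (n : ℕ) (ρa ρb : V → ℕ) (v : V) (j : Fin n) :
    YF G n ρa ρb v j = pat (ρa v) j.val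
      + ∑ i ∈ Finset.range (R0 G).card, Bc G ^ (i+1) * SF G ρb i v j.val := by
  unfold YF SF
  rw [fib_sum (TmF G ρb v) (R0 G).card (idxF G)
    (fun q hq => idxF_lt G (TmF_fst_mem G ρb v hq)) (fun i => Bc G ^ (i+1))
    (fun p => pat p j.val)]

lemma SF_abs_le (G : KG V R D) (ρb : V → ℕ) (i : ℕ) (v : V) (jv : ℕ) :
    |SF G ρb i v jv| ≤ (G.edges.card : ℤ) := by
  unfold SF
  calc |(((TmF G ρb v).filter (fun q => idxF G q.1 = i)).map (fun q => pat q.2 jv)).sum|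
      ≤ (Multiset.card (((TmF G ρb v).filter (fun q => idxF G q.1 = i)).map
          (fun q => pat q.2 jv)) : ℤ) * 1 := by
        apply msum_abs_le
        intro x hx
        obtain ⟨q, hq, rfl⟩ := Multiset.mem_map.mp hx
        exact pat_abs _ _
    _ ≤ (G.edges.card : ℤ) := by
        rw [Multiset.card_map, mul_one]
        have h1 : Multiset.card ((TmF G ρb v).filter (fun q => idxF G q.1 = i))
            ≤ Multiset.card (TmF G ρb v) := Multiset.card_le_card (Multiset.filter_le _ _)
        have h2 := TmF_card_le G ρb v
        exact_mod_cast le_trans h1 h2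

lemma TmF_snd_lt (G : KG V R D) {n : ℕ} {ρb : V → ℕ} (hρb : ∀ w, ρb w < n) (v : V)
    {q : R × ℕ} (hq : q ∈ TmF G ρb v) : q.2 < n := by
  unfold TmF at hq
  obtain ⟨e, _, rfl⟩ := Multiset.mem_map.mp hq
  exact hρb _

/-- Forward: equal scores imply equal WL colors at t+1. -/
lemma key_fwd (G : KG V R D) (n : ℕ) (hn1 : 1 ≤ n) (u₀ : V)
    (t s : ℕ) (hst : s ≤ t) (ρa ρb : V → ℕ)
    (hρa : ∀ w, ρa w < n) (hρb : ∀ w, ρb w < n)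
    (ha : ∀ w w' : V, ρa w = ρa w' ↔ rwl1 G s w = rwl1 G s w')
    (hb : ∀ w w' : V, ρb w = ρb w' ↔ rwl1 G t w = rwl1 G t w')
    (u v : V) (h : GZF G n ρa ρb u = GZF G n ρa ρb v) :
    rwl1 G (t+1) u = rwl1 G (t+1) v := by
  have hC := Cc_one_le G
  have hD := Dc_pos G n
  have hB := Bc_pos G
  set K := (R0 G).card with hK
  -- Step 1: all coordinates of Y agree
  have hYY : ∀ j : Fin n, YF G n ρa ρb u j = YF G n ρa ρb v j := by
    set z : Fin n := ⟨0, hn1⟩ with hz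
    have hsum0 : ∑ j, coefF G n j * (YF G n ρa ρb u j - YF G n ρa ρb v j) = 0 := by
      have he : ∑ j, coefF G n j * (YF G n ρa ρb u j - YF G n ρa ρb v j)
          = GZF G n ρa ρb u - GZF G n ρa ρb v := by
        unfold GZF
        rw [← Finset.sum_sub_distrib]
        exact Finset.sum_congr rfl (fun j _ => by ring)
      rw [he, h, sub_self]
    have hsplit : ∑ j ∈ Finset.univ.erase z,
          coefF G n j * (YF G n ρa ρb u j - YF G n ρa ρb v j)
        + coefF G n z * (YF G n ρa ρb u z - YF G n ρa ρb v z)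
        = ∑ j, coefF G n j * (YF G n ρa ρb u j - YF G n ρa ρb v j) :=
      Finset.sum_erase_add _ _ (Finset.mem_univ z)
    have hcz : coefF G n z = -(Dc G n ^ n) := by rw [coefF]; simp [hz]
    have htail : |∑ j ∈ Finset.univ.erase z,
          coefF G n j * (YF G n ρa ρb u j - YF G n ρa ρb v j)|
        ≤ ((n - 1 : ℕ) : ℤ) * (Dc G n ^ (n-1) * (2 * Cc G)) := by
      calc |∑ j ∈ Finset.univ.erase z,
            coefF G n j * (YF G n ρa ρb u j - YF G n ρa ρb v j)|
          ≤ ∑ j ∈ Finset.univ.erase z,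
              |coefF G n j * (YF G n ρa ρb u j - YF G n ρa ρb v j)| :=
            Finset.abs_sum_le_sum_abs _ _
        _ ≤ (Finset.univ.erase z).card • (Dc G n ^ (n-1) * (2 * Cc G)) := by
            apply Finset.sum_le_card_nsmul
            intro j hj
            have hjz : j.val ≠ 0 := fun h0 => (Finset.mem_erase.mp hj).1 (Fin.ext h0)
            have hcj : coefF G n j = Dc G n ^ j.val := by rw [coefF, if_neg hjz]
            rw [abs_mul, hcj, abs_of_pos (pow_pos hD _)]
            have h1 : Dc G n ^ j.val ≤ Dc G n ^ (n-1) :=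
              pow_le_pow_right₀ (by omega) (by omega)
            have h2 : |YF G n ρa ρb u j - YF G n ρa ρb v j| ≤ 2 * Cc G := by
              have t1 := YF_abs_le G n ρa ρb u j
              have t2 := YF_abs_le G n ρa ρb v j
              have t3 := abs_sub (YF G n ρa ρb u j) (YF G n ρa ρb v j)
              omega
            have h3 : (0:ℤ) ≤ |YF G n ρa ρb u j - YF G n ρa ρb v j| := abs_nonneg _
            nlinarith [pow_pos hD j.val, pow_pos hD (n-1)]
        _ = ((n - 1 : ℕ) : ℤ) * (Dc G n ^ (n-1) * (2 * Cc G)) := by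
            rw [Finset.card_erase_of_mem (Finset.mem_univ z), Finset.card_univ,
              Fintype.card_fin, nsmul_eq_mul]
    have hnlt : ((n - 1 : ℕ) : ℤ) * (2 * Cc G) < Dc G n := by
      have h1 : ((n - 1 : ℕ) : ℤ) ≤ (n:ℤ) + 1 := by
        have : ((n-1:ℕ):ℤ) ≤ (n:ℤ) := by exact_mod_cast Nat.sub_le n 1
        omega
      have h2 : (0:ℤ) ≤ ((n - 1 : ℕ) : ℤ) := Int.natCast_nonneg _
      unfold Dc; nlinarith
    have hpow : Dc G n ^ n = Dc G n ^ (n-1) * Dc G n := by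
      have hp := pow_succ (Dc G n) (n-1)
      rwa [show n - 1 + 1 = n by omega] at hp
    have hpp : (0:ℤ) < Dc G n ^ (n-1) := pow_pos hD _
    have hz0 : YF G n ρa ρb u z = YF G n ρa ρb v z := by
      by_contra hne
      have h1 : 1 ≤ |YF G n ρa ρb u z - YF G n ρa ρb v z| := by
        rcases lt_or_gt_of_ne (sub_ne_zero.mpr hne) with hlt | hgt
        · rw [abs_of_neg hlt]; omega
        · rw [abs_of_pos hgt]; omega
      have heq : coefF G n z * (YF G n ρa ρb u z - YF G n ρa ρb v z)
          = - ∑ j ∈ Finset.univ.erase z,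
              coefF G n j * (YF G n ρa ρb u j - YF G n ρa ρb v j) := by
        omega
      have h2 : Dc G n ^ n ≤ |coefF G n z * (YF G n ρa ρb u z - YF G n ρa ρb v z)| := by
        rw [hcz, abs_mul, abs_neg, abs_of_pos (pow_pos hD _)]
        nlinarith [pow_pos hD n]
      rw [heq, abs_neg] at h2
      have h3 := le_trans h2 htail
      nlinarith
    have herase : ∑ j ∈ Finset.univ.erase z,
        coefF G n j * (YF G n ρa ρb u j - YF G n ρa ρb v j) = 0 := by
      have hzz : coefF G n z * (YF G n ρa ρb u z - YF G n ρa ρb v z) = 0 := by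
        rw [hz0, sub_self, mul_zero]
      omega
    set dd : ℕ → ℤ := fun i =>
      if hi : i < n then
        (if i = 0 then 0 else YF G n ρa ρb u ⟨i, hi⟩ - YF G n ρa ρb v ⟨i, hi⟩)
      else 0 with hdd
    have hconv : ∑ i ∈ Finset.range n, dd i * Dc G n ^ i = 0 := by
      rw [← Fin.sum_univ_eq_sum_range (fun i => dd i * Dc G n ^ i) n]
      have huniv : ∀ j : Fin n, dd j.val * Dc G n ^ j.val
          = if j = z then 0
            else coefF G n j * (YF G n ρa ρb u j - YF G n ρa ρb v j) := by
        intro j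
        simp only [hdd]
        simp only [j.isLt, dif_pos]
        by_cases hj0 : j = z
        · rw [if_pos (by rw [hj0]), if_pos hj0, zero_mul]
        · have hjv : j.val ≠ 0 := fun h0 => hj0 (Fin.ext h0)
          rw [if_neg hjv, if_neg hj0, coefF]
          simp only [if_neg hjv, Fin.eta]
          ring
      rw [Finset.sum_congr rfl (fun j _ => huniv j),
        ← Finset.sum_erase Finset.univ (a := z) (f := fun j => if j = z then 0
            else coefF G n j * (YF G n ρa ρb u j - YF G n ρa ρb v j))
          (by simp),
        Finset.sum_congr rfl
          (fun j hj => if_neg (Finset.mem_erase.mp hj).1), herase]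
    have hdig := digit_zero (Dc G n) (2 * Cc G) (by omega)
      (by unfold Dc; nlinarith [Int.natCast_nonneg n]) n dd
      (by
        intro i
        simp only [hdd]
        by_cases hi : i < n
        · rw [dif_pos hi]
          by_cases hi0 : i = 0
          · rw [if_pos hi0]; simp; omega
          · rw [if_neg hi0]
            have t1 := YF_abs_le G n ρa ρb u ⟨i, hi⟩
            have t2 := YF_abs_le G n ρa ρb v ⟨i, hi⟩
            have t3 := abs_sub (YF G n ρa ρb u ⟨i, hi⟩) (YF G n ρa ρb v ⟨i, hi⟩)
            omega
        · rw [dif_neg hi]; simp; omega) hconv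
    intro j
    by_cases hj : j = z
    · rw [hj]; exact hz0
    · have := hdig j.val j.isLt
      simp only [hdd] at this
      simp only [j.isLt, dif_pos, Fin.eta] at this
      rw [if_neg (fun h0 => hj (Fin.ext h0))] at this
      omega
  -- Step 2: inner digit argument per coordinate
  have hinner : ∀ j : Fin n, pat (ρa u) j.val = pat (ρa v) j.val ∧
      ∀ i, i < K → SF G ρb i u j.val = SF G ρb i v j.val := by
    intro j
    set d : ℕ → ℤ := fun i =>
      if i = 0 then pat (ρa u) j.val - pat (ρa v) j.val
      else if i ≤ K then SF G ρb (i-1) u j.val - SF G ρb (i-1) v j.val else 0 with hd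
    have hsum : ∑ i ∈ Finset.range (K+1), d i * Bc G ^ i = 0 := by
      rw [Finset.sum_range_succ']
      have hterm : ∀ i ∈ Finset.range K, d (i+1) * Bc G ^ (i+1)
          = Bc G ^ (i+1) * SF G ρb i u j.val - Bc G ^ (i+1) * SF G ρb i v j.val := by
        intro i hi
        have hiK : i + 1 ≤ K := Finset.mem_range.mp hi
        simp only [hd]
        rw [if_neg (by omega), if_pos hiK]
        simp only [Nat.add_sub_cancel]
        ring
      rw [Finset.sum_congr rfl hterm, Finset.sum_sub_distrib]
      have hY := hYY j
      rw [YF_decomp, YF_decomp] at hY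
      have hd0 : d 0 = pat (ρa u) j.val - pat (ρa v) j.val := by
        simp [hd]
      rw [hd0, pow_zero, mul_one, ← hK] at *
      omega
    have hm2 : (0:ℤ) ≤ 2 * (G.edges.card:ℤ) + 2 := by positivity
    have hdig := digit_zero (Bc G) (2 * (G.edges.card:ℤ) + 2) hm2
      (by unfold Bc; omega) (K+1) d
      (by
        intro i
        simp only [hd]
        by_cases hi0 : i = 0
        · rw [if_pos hi0]
          have t1 := pat_abs (ρa u) j.val
          have t2 := pat_abs (ρa v) j.val
          have t3 := abs_sub (pat (ρa u) j.val) (pat (ρa v) j.val)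
          omega
        · rw [if_neg hi0]
          by_cases hiK : i ≤ K
          · rw [if_pos hiK]
            have t1 := SF_abs_le G ρb (i-1) u j.val
            have t2 := SF_abs_le G ρb (i-1) v j.val
            have t3 := abs_sub (SF G ρb (i-1) u j.val) (SF G ρb (i-1) v j.val)
            omega
          · rw [if_neg hiK]; simp; omega) hsum
    constructor
    · have h0 := hdig 0 (by omega)
      simp only [hd, if_pos rfl] at h0
      omega
    · intro i hi
      have h0 := hdig (i+1) (by omega)
      simp only [hd] at h0
      rw [if_neg (by omega), if_pos (by omega)] at h0
      simp only [Nat.add_sub_cancel] at h0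
      omega
  -- Step 3: ρa u = ρa v, hence rwl1 at s agrees
  have hρaeq : ρa u = ρa v :=
    pat_inj (hρa u) (hρa v) (fun jn hj => (hinner ⟨jn, hj⟩).1)
  have hrs : rwl1 G s u = rwl1 G s v := (ha u v).mp hρaeq
  -- Step 4: per-fiber rank multisets agree
  have hPi : ∀ i, i < K →
      ((TmF G ρb u).filter (fun q => idxF G q.1 = i)).map Prod.snd
        = ((TmF G ρb v).filter (fun q => idxF G q.1 = i)).map Prod.snd := by
    intro i hi
    apply sep_pat (n := n)
    · intro a haa
      obtain ⟨q, hq, rfl⟩ := Multiset.mem_map.mp haa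
      exact TmF_snd_lt G hρb u (Multiset.mem_of_mem_filter hq)
    · intro a haa
      obtain ⟨q, hq, rfl⟩ := Multiset.mem_map.mp haa
      exact TmF_snd_lt G hρb v (Multiset.mem_of_mem_filter hq)
    · intro jn hjn
      have hSF := (hinner ⟨jn, hjn⟩).2 i hi
      unfold SF at hSF
      rw [Multiset.map_map, Multiset.map_map]
      exact hSF
  -- Step 5: the labelled neighbourhood multisets agree
  have hTm : TmF G ρb u = TmF G ρb v := by
    rw [Multiset.ext]
    rintro ⟨r, p⟩
    by_cases hr : r ∈ R0 G
    · have hcnt : ∀ w : V, Multiset.count (r, p) (TmF G ρb w)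
          = Multiset.count p (((TmF G ρb w).filter
              (fun q => idxF G q.1 = idxF G r)).map Prod.snd) := by
        intro w
        rw [Multiset.count_map, Multiset.filter_filter,
          Multiset.count_eq_card_filter_eq]
        congr 1
        apply Multiset.filter_congr
        rintro ⟨r', p'⟩ hq
        have hr' : r' ∈ R0 G := TmF_fst_mem G ρb w hq
        constructor
        · intro he
          rw [← he]
          exact ⟨rfl, rfl⟩
        · rintro ⟨hp', hidx⟩
          have hr'' : r' = r := idxF_inj G hr' hr hidx
          subst hr''
          rw [show p = p' from hp']
      rw [hcnt u, hcnt v, hPi (idxF G r) (idxF_lt G hr)]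
    · rw [Multiset.count_eq_zero_of_notMem, Multiset.count_eq_zero_of_notMem]
      · intro hmem; exact hr (TmF_fst_mem G ρb v hmem)
      · intro hmem; exact hr (TmF_fst_mem G ρb u hmem)
  -- Step 6: message multisets agree
  have hmsg : G.msgMS (rwl1 G t) u = G.msgMS (rwl1 G t) v := by
    classical
    have hrep : ∀ w : V, G.msgMS (rwl1 G t) w
        = (TmF G ρb w).map (fun q =>
            (rwl1 G t (if h : ∃ w', ρb w' = q.2 then h.choose else u₀), q.1)) := by
      intro w
      unfold KG.msgMS TmF
      rw [Multiset.map_map]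
      refine Multiset.map_congr rfl ?_
      intro e _
      simp only [Function.comp]
      have hex : ∃ w', ρb w' = ρb e.2.1 := ⟨e.2.1, rfl⟩
      rw [dif_pos hex]
      have : rwl1 G t hex.choose = rwl1 G t e.2.1 := (hb _ _).mp hex.choose_spec
      rw [this]
    rw [hrep u, hrep v, hTm]
  -- Step 7: conclude via the history lemma
  have hrt : rwl1 G t u = rwl1 G t v := rwl1_history G hst hrs hmsg
  show (rwl1 G t u, G.msgMS (rwl1 G t) u) = (rwl1 G t v, G.msgMS (rwl1 G t) v)
  rw [hrt, hmsg]

/-- Backward: equal WL colors at t+1 imply equal scores. -/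
lemma key_bwd (G : KG V R D) (n : ℕ) (u₀ : V)
    (t s : ℕ) (hst : s ≤ t) (ρa ρb : V → ℕ)
    (ha : ∀ w w' : V, ρa w = ρa w' ↔ rwl1 G s w = rwl1 G s w')
    (hb : ∀ w w' : V, ρb w = ρb w' ↔ rwl1 G t w = rwl1 G t w')
    (u v : V) (h : rwl1 G (t+1) u = rwl1 G (t+1) v) :
    GZF G n ρa ρb u = GZF G n ρa ρb v := by
  have hrt : rwl1 G t u = rwl1 G t v := congrArg Prod.fst h
  have hmsg : G.msgMS (rwl1 G t) u = G.msgMS (rwl1 G t) v := congrArg Prod.snd h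
  have hρaeq : ρa u = ρa v := (ha u v).mpr (rwl1_eq_of_le G hst hrt)
  have hTm : TmF G ρb u = TmF G ρb v := by
    classical
    have hrep : ∀ w : V, TmF G ρb w
        = (G.msgMS (rwl1 G t) w).map (fun z =>
            (z.2, ρb (if hx : ∃ w', rwl1 G t w' = z.1 then hx.choose else u₀))) := by
      intro w
      unfold KG.msgMS TmF
      rw [Multiset.map_map]
      refine Multiset.map_congr rfl ?_
      intro e _
      simp only [Function.comp]
      have hex : ∃ w', rwl1 G t w' = rwl1 G t e.2.1 := ⟨e.2.1, rfl⟩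
      rw [dif_pos hex]
      have : ρb hex.choose = ρb e.2.1 := (hb _ _).mpr hex.choose_spec
      rw [this]
    rw [hrep u, hrep v, hmsg]
  unfold GZF
  refine Finset.sum_congr rfl (fun j _ => ?_)
  unfold YF
  rw [hρaeq, hTm]

end Key

section StepMain
variable {V R D : Type} [Fintype V] [DecidableEq V] [DecidableEq R]

lemma map_cast_sum {β : Type*} (s : Multiset β) (g : β → ℤ) :
    ((s.map (fun b => ((g b : ℤ) : ℝ))).sum) = (((s.map g).sum : ℤ) : ℝ) := by
  induction s using Multiset.induction_on with
  | empty => simp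
  | cons b s ih =>
    rw [Multiset.map_cons, Multiset.sum_cons, ih, Multiset.map_cons, Multiset.sum_cons]
    push_cast
    ring

lemma bridge (G : KG V R D) (n : ℕ) (ρa ρb : V → ℕ) (v : V) (j : Fin n) :
    ((pat (ρa v) j.val : ℤ) : ℝ)
      + ((G.edges.val.filter (fun e => e.2.2 = v)).map
          (fun e => alphaF G e.1 * ((pat (ρb e.2.1) j.val : ℤ) : ℝ))).sum
    = ((YF G n ρa ρb v j : ℤ) : ℝ) := by
  have h1 : (G.edges.val.filter (fun e => e.2.2 = v)).map
        (fun e => alphaF G e.1 * ((pat (ρb e.2.1) j.val : ℤ) : ℝ))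
      = (G.edges.val.filter (fun e => e.2.2 = v)).map
        (fun e => (((Bc G ^ (idxF G e.1 + 1) * pat (ρb e.2.1) j.val : ℤ) : ℝ))) := by
    refine Multiset.map_congr rfl ?_
    intro e _
    show ((Bc G ^ (idxF G e.1 + 1) : ℤ) : ℝ) * _ = _
    rw [← Int.cast_mul]
  rw [h1, map_cast_sum]
  have h2 : (G.edges.val.filter (fun e => e.2.2 = v)).map
        (fun e => Bc G ^ (idxF G e.1 + 1) * pat (ρb e.2.1) j.val)
      = (TmF G ρb v).map (fun q => Bc G ^ (idxF G q.1 + 1) * pat q.2 j.val) := by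
    unfold TmF
    rw [Multiset.map_map]
    rfl
  rw [h2]
  show _ = ((pat (ρa v) j.val
    + ((TmF G ρb v).map (fun q => Bc G ^ (idxF G q.1 + 1) * pat q.2 j.val)).sum : ℤ) : ℝ)
  push_cast
  ring

lemma step (G : KG V R D) (n : ℕ) (hnV : Fintype.card V ≤ n) (hn1 : 1 ≤ n) (u₀ : V)
    (t s : ℕ) (hst : s ≤ t) (ρa ρb : V → ℕ)
    (hρa : ∀ w, ρa w < n) (hρb : ∀ w, ρb w < n)
    (ha : ∀ w w' : V, ρa w = ρa w' ↔ rwl1 G s w = rwl1 G s w')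
    (hb : ∀ w w' : V, ρb w = ρb w' ↔ rwl1 G t w = rwl1 G t w') :
    ∃ (Wt : Matrix (Fin n) (Fin n) ℝ) (ρc : V → ℕ),
      (∀ w, ρc w < n) ∧
      (∀ w w' : V, ρc w = ρc w' ↔ rwl1 G (t+1) w = rwl1 G (t+1) w') ∧
      (∀ v (i : Fin n),
        Real.sign ((∑ j, Wt i j * (((pat (ρa v) j.val : ℤ) : ℝ)
          + ((G.edges.val.filter (fun e => e.2.2 = v)).map
              (fun e => alphaF G e.1 * ((pat (ρb e.2.1) j.val : ℤ) : ℝ))).sum)) - 1)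
        = ((pat (ρc v) i.val : ℤ) : ℝ)) := by
  classical
  have hkey : ∀ u v : V, GZF G n ρa ρb u = GZF G n ρa ρb v ↔
      rwl1 G (t+1) u = rwl1 G (t+1) v := fun u v =>
    ⟨key_fwd G n hn1 u₀ t s hst ρa ρb hρa hρb ha hb u v,
     key_bwd G n u₀ t s hst ρa ρb ha hb u v⟩
  set vals : Finset ℤ := Finset.image (GZF G n ρa ρb) Finset.univ with hvals
  have hne : vals.Nonempty :=
    ⟨GZF G n ρa ρb u₀, Finset.mem_image_of_mem _ (Finset.mem_univ u₀)⟩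
  set k := vals.card with hk
  have hk1 : 1 ≤ k := Finset.card_pos.mpr hne
  have hkn : k ≤ n := by
    rw [hk, hvals]
    exact le_trans Finset.card_image_le (by rw [Finset.card_univ]; exact hnV)
  set oi := vals.orderIsoOfFin hk.symm with hoi
  set sv : Fin k → ℤ := fun i => ((oi i : { x // x ∈ vals }) : ℤ) with hsv
  have hmono : StrictMono sv := by
    intro a b hab
    exact_mod_cast oi.strictMono hab
  have hmem : ∀ v : V, GZF G n ρa ρb v ∈ vals := fun v =>
    Finset.mem_image_of_mem _ (Finset.mem_univ v)
  set rank : V → Fin k := fun v => oi.symm ⟨GZF G n ρa ρb v, hmem v⟩ with hrank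
  have hsvrank : ∀ v, sv (rank v) = GZF G n ρa ρb v := by
    intro v
    rw [hsv, hrank]
    simp only [OrderIso.apply_symm_apply]
  have hrankeq : ∀ u v : V, rank u = rank v ↔ GZF G n ρa ρb u = GZF G n ρa ρb v := by
    intro u v
    constructor
    · intro he
      rw [← hsvrank u, ← hsvrank v, he]
    · intro he
      rw [hrank]
      simp only
      congr 1
      exact Subtype.ext he
  have hGpos : ∀ v, 0 < GZF G n ρa ρb v := GZF_pos G n hn1 ρa ρb
  have hsvpos : ∀ i : Fin k, 0 < sv i := by
    intro i
    have hmem2 := (oi i).2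
    obtain ⟨w, _, hw⟩ := Finset.mem_image.mp hmem2
    have he : sv i = GZF G n ρa ρb w := hw.symm
    have := hGpos w
    omega
  set sv' : ℕ → ℤ := fun a => if h : a < k then sv ⟨a, h⟩ else 0 with hsv'
  have hsv'pos : ∀ a, a < k → 0 < sv' a := by
    intro a hak
    simp only [hsv']
    rw [dif_pos hak]
    exact hsvpos _
  have hmono' : ∀ a b, a ≤ b → b < k → sv' a ≤ sv' b := by
    intro a b hab hbk
    simp only [hsv']
    rw [dif_pos hbk, dif_pos (by omega)]
    rcases eq_or_lt_of_le hab with rfl | hlt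
    · rfl
    · exact le_of_lt (hmono (by simp only [Fin.lt_def]; omega))
  have hstrict' : ∀ a b, a < b → b < k → sv' a < sv' b := by
    intro a b hab hbk
    simp only [hsv']
    rw [dif_pos hbk, dif_pos (by omega)]
    exact hmono (by simp only [Fin.lt_def]; omega)
  have hsrank : ∀ v : V, sv' (rank v).val = GZF G n ρa ρb v := by
    intro v
    simp only [hsv']
    rw [dif_pos (rank v).isLt]
    have : (⟨(rank v).val, (rank v).isLt⟩ : Fin k) = rank v := Fin.eta _ _
    rw [this]
    exact hsvrank v
  set θ : ℕ → ℤ := fun i =>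
    if i < k ∧ 1 ≤ i then sv' (i-1) + sv' i
    else 2 * sv' (k-1) + 1 with hθ
  have hθpos : ∀ i, 0 < θ i := by
    intro i
    simp only [hθ]
    by_cases h : i < k ∧ 1 ≤ i
    · rw [if_pos h]
      have := hsv'pos (i-1) (by omega)
      have := hsv'pos i h.1
      omega
    · rw [if_neg h]
      have := hsv'pos (k-1) (by omega)
      omega
  refine ⟨Matrix.of fun i j => if i.val = 0 then 0
      else ((2 * coefF G n j : ℤ) : ℝ) / ((θ i.val : ℤ) : ℝ),
    fun v => (rank v).val, fun w => lt_of_lt_of_le (rank w).isLt hkn, ?_, ?_⟩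
  · intro w w'
    rw [← hkey w w', ← hrankeq w w']
    exact ⟨fun h => Fin.ext h, fun h => congrArg Fin.val h⟩
  · intro v i
    have hbr : ∀ j : Fin n, ((pat (ρa v) j.val : ℤ) : ℝ)
        + ((G.edges.val.filter (fun e => e.2.2 = v)).map
            (fun e => alphaF G e.1 * ((pat (ρb e.2.1) j.val : ℤ) : ℝ))).sum
        = ((YF G n ρa ρb v j : ℤ) : ℝ) := fun j => bridge G n ρa ρb v j
    rw [Finset.sum_congr rfl (fun j _ => by rw [hbr j])]
    by_cases hi0 : i.val = 0
    · have hrow : ∀ j : Fin n, (Matrix.of fun i j => if i.val = 0 then (0:ℝ)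
          else ((2 * coefF G n j : ℤ) : ℝ) / ((θ i.val : ℤ) : ℝ)) i j
            * ((YF G n ρa ρb v j : ℤ) : ℝ) = 0 := by
        intro j
        rw [Matrix.of_apply, if_pos hi0, zero_mul]
      rw [Finset.sum_congr rfl (fun j _ => hrow j), Finset.sum_const_zero]
      rw [Real.sign_of_neg (by norm_num : (0:ℝ) - 1 < 0)]
      rw [hi0, pat_zero]
      norm_num
    · have hθR : (0:ℝ) < ((θ i.val : ℤ) : ℝ) := by exact_mod_cast hθpos i.val
      have hrow : ∀ j : Fin n, (Matrix.of fun i j => if i.val = 0 then (0:ℝ)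
          else ((2 * coefF G n j : ℤ) : ℝ) / ((θ i.val : ℤ) : ℝ)) i j
            * ((YF G n ρa ρb v j : ℤ) : ℝ)
          = (((2 * coefF G n j * YF G n ρa ρb v j : ℤ) : ℝ)) / ((θ i.val : ℤ) : ℝ) := by
        intro j
        rw [Matrix.of_apply, if_neg hi0, div_mul_eq_mul_div, ← Int.cast_mul]
      rw [Finset.sum_congr rfl (fun j _ => hrow j), ← Finset.sum_div]
      have hsum : ∑ j, ((2 * coefF G n j * YF G n ρa ρb v j : ℤ) : ℝ)
          = ((2 * GZF G n ρa ρb v : ℤ) : ℝ) := by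
        rw [← Int.cast_sum]
        congr 1
        rw [GZF, Finset.mul_sum]
        exact Finset.sum_congr rfl (fun j _ => by ring)
      rw [hsum]
      have hdiv : ((2 * GZF G n ρa ρb v : ℤ) : ℝ) / ((θ i.val : ℤ) : ℝ) - 1
          = ((2 * GZF G n ρa ρb v - θ i.val : ℤ) : ℝ) / ((θ i.val : ℤ) : ℝ) := by
        rw [div_sub_one (ne_of_gt hθR)]
        push_cast
        ring
      rw [hdiv]
      have hi1 : 1 ≤ i.val := by omega
      have hrk : (rank v).val < k := (rank v).isLt
      by_cases hile : i.val ≤ (rank v).val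
      · -- positive case
        have hik : i.val < k := lt_of_le_of_lt hile (rank v).isLt
        have hq : 0 < 2 * GZF G n ρa ρb v - θ i.val := by
          simp only [hθ]
          rw [if_pos ⟨hik, hi1⟩]
          have h1 : sv' i.val ≤ sv' (rank v).val := hmono' _ _ hile (rank v).isLt
          have h2 : sv' (i.val - 1) < sv' i.val := hstrict' _ _ (by omega) hik
          have h3 := hsrank v
          omega
        rw [Real.sign_of_pos (div_pos (by exact_mod_cast hq) hθR)]
        rw [pat, if_pos ⟨hi1, hile⟩]
        norm_num
      · -- negative case
        have hq : 2 * GZF G n ρa ρb v - θ i.val < 0 := by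
          simp only [hθ]
          by_cases hik : i.val < k
          · rw [if_pos ⟨hik, hi1⟩]
            have h1 : sv' (rank v).val ≤ sv' (i.val - 1) :=
              hmono' _ _ (by omega) (by omega)
            have h2 : sv' (i.val - 1) < sv' i.val := hstrict' _ _ (by omega) hik
            have h3 := hsrank v
            omega
          · rw [if_neg (by tauto)]
            have h1 : sv' (rank v).val ≤ sv' (k-1) :=
              hmono' _ _ (by omega) (by omega)
            have h3 := hsrank v
            omega
        rw [Real.sign_of_neg (div_neg_of_neg_of_pos (by exact_mod_cast hq) hθR)]
        rw [pat, if_neg (fun hcon => hile hcon.2)]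
        norm_num

end StepMain

section MainProof
variable {V R D : Type} [Fintype V] [DecidableEq V] [DecidableEq R]

lemma signModel_congrW {n : ℕ} (G : KG V R D) (f : ℕ → ℕ) (hf : ∀ t, f t ≤ t)
    (x : V → Fin n → ℝ) (W W' : ℕ → Matrix (Fin n) (Fin n) ℝ) (α : ℕ → R → ℝ) :
    ∀ t, (∀ s, s < t → W s = W' s) →
      signModel G f hf x W α t = signModel G f hf x W' α t := by
  intro t
  induction t using Nat.strong_induction_on with
  | _ t ih =>
    intro hW
    match t with
    | 0 => rw [signModel, signModel]
    | Nat.succ t =>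
      have h1 : signModel G f hf x W α (f t) = signModel G f hf x W' α (f t) :=
        ih (f t) (Nat.lt_succ_of_le (hf t)) (fun s hs => hW s (by have := hf t; omega))
      have h2 : signModel G f hf x W α t = signModel G f hf x W' α t :=
        ih t (Nat.lt_succ_self t) (fun s hs => hW s (by omega))
      have h3 : W t = W' t := hW t (Nat.lt_succ_self t)
      funext v i
      rw [signModel]
      conv_rhs => rw [signModel]
      simp only [h1, h2, h3]

lemma enc_inj {n : ℕ} {ρu ρv : ℕ} (hu : ρu < n) (hv : ρv < n)
    (h : ∀ i : Fin n, ((pat ρu i.val : ℤ) : ℝ) = ((pat ρv i.val : ℤ) : ℝ)) : ρu = ρv :=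
  pat_inj hu hv (fun j hj => by exact_mod_cast h ⟨j, hj⟩)

lemma good_zero (G : KG V R D) :
    ∃ ρ0 : V → ℕ, (∀ v, ρ0 v < Fintype.card V) ∧
      (∀ u v : V, ρ0 u = ρ0 v ↔ G.color u = G.color v) := by
  classical
  set S : Finset D := Finset.univ.image G.color with hS
  have hmem : ∀ v : V, G.color v ∈ S := fun v =>
    Finset.mem_image_of_mem _ (Finset.mem_univ v)
  refine ⟨fun v => (S.equivFin ⟨G.color v, hmem v⟩).val, ?_, ?_⟩
  · intro v
    exact lt_of_lt_of_le (S.equivFin ⟨G.color v, hmem v⟩).isLt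
      (le_trans Finset.card_image_le (le_of_eq Finset.card_univ))
  · intro u v
    show (S.equivFin ⟨G.color u, hmem u⟩).val = (S.equivFin ⟨G.color v, hmem v⟩).val ↔ _
    constructor
    · intro h
      have := S.equivFin.injective (Fin.ext h)
      exact congrArg Subtype.val this
    · intro h
      have he : (⟨G.color u, hmem u⟩ : {x // x ∈ S}) = ⟨G.color v, hmem v⟩ := Subtype.ext h
      rw [he]

end MainProof

/-- For every knowledge graph `G` with `n = |V|`, every `T ≥ 0` and every
history function `f`, there are an initial feature map `x : V → ℝⁿ` with `c ≡ x`,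
matrices `W^(t) ∈ ℝ^{n×n}` and scalars `α_r^(t)` such that the resulting sign-model
features satisfy `h^(t) ≡ rwl₁^(t)` for all `0 ≤ t ≤ T`. -/
theorem signModel_simulates_rwl1 {V R D : Type} [Fintype V] [DecidableEq V] [DecidableEq R]
    (G : KG V R D) (T : ℕ) (f : ℕ → ℕ) (hf_mono : Monotone f) (hf : ∀ t, f t ≤ t) :
    ∃ (x : V → Fin (Fintype.card V) → ℝ)
      (W : ℕ → Matrix (Fin (Fintype.card V)) (Fin (Fintype.card V)) ℝ)
      (α : ℕ → R → ℝ),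
      (∀ u v : V, G.color u = G.color v ↔ x u = x v) ∧
      ∀ t ≤ T, ∀ u v : V,
        signModel G f hf x W α t u = signModel G f hf x W α t v ↔
          rwl1 G t u = rwl1 G t v := by
  classical
  rcases isEmpty_or_nonempty V with hemp | hne
  · exact ⟨fun v => isEmptyElim v, fun _ => 0, fun _ _ => 0,
      fun u => isEmptyElim u, fun t ht u => isEmptyElim u⟩
  · obtain ⟨u₀⟩ := hne
    have hn1 : 1 ≤ Fintype.card V := Fintype.card_pos_iff.mpr ⟨u₀⟩
    obtain ⟨ρ0, hρ0lt, hρ0iff⟩ := good_zero G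
    set n := Fintype.card V with hn
    set x : V → Fin n → ℝ := fun v j => ((pat (ρ0 v) j.val : ℤ) : ℝ) with hx
    set α : ℕ → R → ℝ := fun _ => alphaF G with hα
    have main : ∀ T' : ℕ, ∃ W : ℕ → Matrix (Fin n) (Fin n) ℝ,
        ∀ t ≤ T', ∃ ρ : V → ℕ, (∀ w, ρ w < n) ∧
          (∀ (v : V) (i : Fin n),
            signModel G f hf x W α t v i = ((pat (ρ v) i.val : ℤ) : ℝ)) ∧
          (∀ u v : V, ρ u = ρ v ↔ rwl1 G t u = rwl1 G t v) := by
      intro T'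
      induction T' with
      | zero =>
        refine ⟨fun _ => 0, ?_⟩
        intro t ht
        have ht0 : t = 0 := Nat.le_zero.mp ht
        subst ht0
        refine ⟨ρ0, hρ0lt, ?_, ?_⟩
        · intro v i
          rw [signModel]
        · intro u v
          exact hρ0iff u v
      | succ T' ih =>
        obtain ⟨W, hW⟩ := ih
        obtain ⟨ρb, hρblt, hρbpt, hρbiff⟩ := hW T' le_rfl
        obtain ⟨ρa, hρalt, hρapt, hρaiff⟩ := hW (f T') (hf T')
        obtain ⟨Wt, ρc, hρclt, hρciff, hWt⟩ :=
          step G n le_rfl hn1 u₀ T' (f T') (hf T') ρa ρb hρalt hρblt hρaiff hρbiff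
        refine ⟨Function.update W T' Wt, ?_⟩
        intro t ht
        rcases Nat.lt_or_ge t (T'+1) with hlt | hge
        · have hWeq : signModel G f hf x (Function.update W T' Wt) α t
              = signModel G f hf x W α t :=
            signModel_congrW G f hf x _ W α t
              (fun s hs => Function.update_of_ne (by omega) _ _)
          obtain ⟨ρ, h1, h2, h3⟩ := hW t (by omega)
          exact ⟨ρ, h1, fun v i => by rw [hWeq]; exact h2 v i, h3⟩
        · have ht1 : t = T' + 1 := by omega
          subst ht1
          refine ⟨ρc, hρclt, ?_, hρciff⟩
          intro v i
          rw [signModel]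
          have e1 : signModel G f hf x (Function.update W T' Wt) α (f T')
              = signModel G f hf x W α (f T') :=
            signModel_congrW G f hf x _ W α (f T')
              (fun s hs => Function.update_of_ne (by have := hf T'; omega) _ _)
          have e2 : signModel G f hf x (Function.update W T' Wt) α T'
              = signModel G f hf x W α T' :=
            signModel_congrW G f hf x _ W α T'
              (fun s hs => Function.update_of_ne (by omega) _ _)
          simp only [e1, e2, Function.update_self, hρapt, hρbpt]
          simp only [hα]
          exact hWt v i
    obtain ⟨W, hW⟩ := main T
    refine ⟨x, W, α, ?_, ?_⟩
    · intro u v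
      rw [← hρ0iff u v]
      constructor
      · intro h
        funext i
        simp only [hx]
        rw [h]
      · intro h
        apply enc_inj (hρ0lt u) (hρ0lt v)
        intro i
        have h2 := congrFun h i
        simpa [hx] using h2
    · intro t ht u v
      obtain ⟨ρ, h1, h2, h3⟩ := hW t ht
      constructor
      · intro h
        refine (h3 u v).mp (enc_inj (h1 u) (h1 v) ?_)
        intro i
        rw [← h2 u i, ← h2 v i, h]
      · intro h
        funext i
        rw [h2 u i, h2 v i, (h3 u v).mpr h]
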